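/- arXiv:1504.07227 — 4 statements merged into one kernel-verified Lean document; each statement's English description precedes it below -/
import Mathlib

section
/- With payoff π_A(T_A, T_B) = F(T_A) − c − dS if T_A < T_B, F(T_A)/2 − c − dS if T_A = T_B, and −dS if T_A > T_B (all times in {0,...,T₀}, T_B < T₀), suppose T* < T₀ satisfies c ≤ F(T*) ≤ 2c, F(T*+1) ≤ 2·F(T*), and F(T*−1) ≤ c, with F strictly increasing, dS ≥ 0. Then (T_A, T_B) = (T*+1, T*) is a Nash equilibrium: firm B cannot improve by deviating from T*, and firm A cannot improve by deviating from T*+1. -/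
/-- Payoff of a firm that decodes at time `TA` against an opponent decoding at
`TB`, with market-efficiency horizon `T₀`. -/
noncomputable def latencyPayoff (F : ℕ → ℝ) (c dS : ℝ) (T₀ TA TB : ℕ) : ℝ :=
  if TA < min TB T₀ then F TA - c - dS
  else if TA = min TB T₀ then F TA / 2 - c - dS
  else -dS

/-- Under the WIN conditions, `(T_A, T_B) = (T*+1, T*)` is a Nash equilibrium:
firm A cannot improve by deviating from `T*+1` and firm B cannot improve by
deviating from `T*`. -/
theorem stmt_4 (F : ℕ → ℝ) (c dS : ℝ) (T₀ T : ℕ)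
    (hF : StrictMono F) (hdS : 0 ≤ dS) (hT : T < T₀)
    (h1 : c ≤ F T) (h2 : F T ≤ 2 * c)
    (h3 : F (T + 1) ≤ 2 * F T) (h4 : F (T - 1) ≤ c) :
    (∀ t ≤ T₀, latencyPayoff F c dS T₀ t T ≤ latencyPayoff F c dS T₀ (T + 1) T) ∧
    (∀ t ≤ T₀, latencyPayoff F c dS T₀ t (T + 1) ≤ latencyPayoff F c dS T₀ T (T + 1)) := by
  have hminT : min T T₀ = T := min_eq_left hT.le
  have hminT1 : min (T + 1) T₀ = T + 1 := min_eq_left hT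
  constructor
  · intro t ht
    simp only [latencyPayoff, hminT]
    rw [if_neg (by omega : ¬ T + 1 < T), if_neg (by omega : ¬ T + 1 = T)]
    rcases lt_trichotomy t T with h | h | h
    · rw [if_pos h]
      have hle : F t ≤ F (T - 1) := hF.monotone (by omega)
      linarith
    · subst h
      rw [if_neg (by omega), if_pos rfl]
      linarith
    · rw [if_neg (by omega), if_neg (by omega)]
  · intro t ht
    simp only [latencyPayoff, hminT1]
    rw [if_pos (by omega : T < T + 1)]
    rcases lt_trichotomy t (T + 1) with h | h | h
    · rw [if_pos h]
      have hle : F t ≤ F T := hF.monotone (by omega)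
      linarith
    · subst h
      rw [if_neg (by omega), if_pos rfl]
      linarith
    · rw [if_neg (by omega), if_neg (by omega)]
      linarith
end

section
/- Under the WIN conditions (c ≤ F(T*) ≤ 2c, F(T*+1) ≤ 2F(T*), F(T*−1) ≤ c) with F strictly increasing and dS ≥ 0, both (T*+1, T*) and (T*, T*+1) are Nash equilibria of the latency game, and they yield different winners (in the first, firm B acts first; in the second, firm A acts first). -/
/-- Under the WIN conditions, both `(T*+1, T*)` and `(T*, T*+1)` are Nash
equilibria of the (symmetric) latency game, and they have different winners:
in the first profile the player at `T*` (firm B) acts strictly first, and in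
the second profile the player at `T*` (firm A) acts strictly first. -/
theorem stmt_5 (F : ℕ → ℝ) (c dS : ℝ) (T₀ T : ℕ)
    (hF : StrictMono F) (hc : 0 < c) (hdS : 0 ≤ dS) (hT : T + 1 ≤ T₀)
    (h1 : c ≤ F T) (h2 : F T ≤ 2 * c)
    (h3 : F (T + 1) ≤ 2 * F T) (h4 : F (T - 1) ≤ c) :
    -- `(T*+1, T*)` is a Nash equilibrium (A plays T*+1, B plays T*):
    ((∀ t ≤ T₀, latencyPayoff F c dS T₀ t T ≤ latencyPayoff F c dS T₀ (T + 1) T) ∧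
     (∀ t ≤ T₀, latencyPayoff F c dS T₀ t (T + 1) ≤ latencyPayoff F c dS T₀ T (T + 1))) ∧
    -- `(T*, T*+1)` is a Nash equilibrium (A plays T*, B plays T*+1):
    ((∀ t ≤ T₀, latencyPayoff F c dS T₀ t (T + 1) ≤ latencyPayoff F c dS T₀ T (T + 1)) ∧
     (∀ t ≤ T₀, latencyPayoff F c dS T₀ t T ≤ latencyPayoff F c dS T₀ (T + 1) T)) ∧
    -- the winners differ: the player at `T*` acts strictly before the other
    T < T + 1 ∧ (T + 1, T) ≠ (T, T + 1) := by
  have hTle : T ≤ T₀ := le_trans (Nat.le_succ T) hT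
  have hminT : min T T₀ = T := min_eq_left hTle
  have hminT1 : min (T + 1) T₀ = T + 1 := min_eq_left hT
  -- deviation against opponent at T: best response payoff is -dS at T+1
  have hA : ∀ t ≤ T₀, latencyPayoff F c dS T₀ t T ≤ latencyPayoff F c dS T₀ (T + 1) T := by
    intro t ht
    have hrhs : latencyPayoff F c dS T₀ (T + 1) T = -dS := by
      unfold latencyPayoff
      rw [hminT]
      simp [Nat.lt_irrefl, Nat.succ_ne_self]
    rw [hrhs]
    unfold latencyPayoff
    rw [hminT]
    rcases lt_trichotomy t T with h | h | h
    · rw [if_pos h]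
      have ht1 : t ≤ T - 1 := Nat.le_sub_one_of_lt h
      have : F t ≤ c := le_trans (hF.monotone ht1) h4
      linarith
    · subst h
      rw [if_neg (lt_irrefl _), if_pos rfl]
      linarith
    · rw [if_neg (not_lt.mpr h.le), if_neg (Nat.ne_of_gt h)]
  -- deviation against opponent at T+1: best response payoff is F T - c - dS at T
  have hB : ∀ t ≤ T₀, latencyPayoff F c dS T₀ t (T + 1) ≤ latencyPayoff F c dS T₀ T (T + 1) := by
    intro t ht
    have hrhs : latencyPayoff F c dS T₀ T (T + 1) = F T - c - dS := by
      unfold latencyPayoff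
      rw [hminT1, if_pos (Nat.lt_succ_self T)]
    rw [hrhs]
    unfold latencyPayoff
    rw [hminT1]
    rcases lt_trichotomy t (T + 1) with h | h | h
    · rw [if_pos h]
      have : F t ≤ F T := hF.monotone (Nat.lt_succ_iff.mp h)
      linarith
    · subst h
      rw [if_neg (lt_irrefl _), if_pos rfl]
      linarith
    · rw [if_neg (not_lt.mpr h.le), if_neg (Nat.ne_of_gt h)]
      linarith
  refine ⟨⟨hA, hB⟩, ⟨hB, hA⟩, Nat.lt_succ_self T, ?_⟩
  intro h
  exact Nat.succ_ne_self T (congrArg Prod.fst h)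
end

section
/- Under the WIN conditions with F strictly increasing, the symmetric profile (T*, T*) is NOT a Nash equilibrium: since F(T*) ≤ 2c, a firm decoding at T* simultaneously with its opponent earns F(T*)/2 − c − dS ≤ −dS, and strict inequality F(T*) < 2c implies it strictly improves by delaying to T*+1 (earning −dS). -/
/-- Under the WIN conditions with the strict inequality `F T* < 2c`, the
symmetric profile `(T*, T*)` is NOT a Nash equilibrium: a firm strictly
improves its payoff by delaying to `T*+1`, so in particular the tie payoff
`F T*/2 - c - dS` is strictly below `-dS`. -/
theorem stmt_6 (F : ℕ → ℝ) (c dS : ℝ) (T₀ T : ℕ)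
    (hF : StrictMono F) (hdS : 0 ≤ dS) (hT : T < T₀)
    (h1 : c ≤ F T) (h2 : F T < 2 * c)
    (h3 : F (T + 1) ≤ 2 * F T) (h4 : F (T - 1) ≤ c) :
    latencyPayoff F c dS T₀ T T ≤ -dS ∧
    latencyPayoff F c dS T₀ T T < latencyPayoff F c dS T₀ (T + 1) T ∧
    ¬ (∀ t ≤ T₀, latencyPayoff F c dS T₀ t T ≤ latencyPayoff F c dS T₀ T T) := by
  have hmin : min T T₀ = T := min_eq_left hT.le
  have hTT : latencyPayoff F c dS T₀ T T = F T / 2 - c - dS := by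
    simp [latencyPayoff, hmin]
  have hT1 : latencyPayoff F c dS T₀ (T+1) T = -dS := by
    simp [latencyPayoff, hmin]
  have hlt : F T / 2 - c - dS < -dS := by linarith
  refine ⟨by rw [hTT]; linarith, by rw [hTT, hT1]; exact hlt, fun h => ?_⟩
  have := h (T+1) hT
  rw [hTT, hT1] at this
  linarith
end

section
/- Consider best-response dynamics T_{n+1} = BR(T_n) where BR(T) = T−1 if F(T−1) ≥ max(c, F(T)/2), BR(T) = T if F(T)/2 ≥ max(F(T−1), c), and BR(T) = T+1 if c ≥ max(F(T−1), F(T)/2), with F : ℕ → ℝ strictly increasing, F(0) < c < F(T₀), and ties in conditions broken consistently. Then starting from any T₀' ∈ {1,...,T₀}, the sequence (T_n) is eventually constant or eventually alternates between two consecutive values T* and T*+1. -/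
/-- Best-response dynamics of the latency game: the sequence `seq` obtained by
iterating a best-response map `BR` (undercut by one, match, or wait one step
longer, with ties in the defining conditions broken consistently by `BR`)
starting from any point of `{1, ..., T₀}` is eventually constant or eventually
alternates between two consecutive values `T*` and `T* + 1`. -/
theorem stmt_8 (F : ℕ → ℝ) (c : ℝ) (T₀ : ℕ) (BR : ℕ → ℕ) (seq : ℕ → ℕ)
    (hF : StrictMono F) (h0 : F 0 < c) (h1 : c < F T₀)
    (hBR : ∀ T : ℕ,
      (BR T = T - 1 ∧ F (T - 1) ≥ max c (F T / 2)) ∨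
      (BR T = T ∧ F T / 2 ≥ max (F (T - 1)) c) ∨
      (BR T = T + 1 ∧ c ≥ max (F (T - 1)) (F T / 2)))
    (hseq : ∀ n, seq (n + 1) = BR (seq n))
    (hstart : 1 ≤ seq 0 ∧ seq 0 ≤ T₀) :
    ∃ N : ℕ,
      (∀ n ≥ N, seq n = seq N) ∨
      (∃ T : ℕ, ∀ n ≥ N,
        (seq n = T ∧ seq (n + 1) = T + 1) ∨ (seq n = T + 1 ∧ seq (n + 1) = T)) := by
  -- each step moves by at most one
  have hstep : ∀ n, seq (n+1) = seq n - 1 ∨ seq (n+1) = seq n ∨ seq (n+1) = seq n + 1 := by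
    intro n
    rcases hBR (seq n) with ⟨h, _⟩ | ⟨h, _⟩ | ⟨h, _⟩ <;> rw [hseq n, h] <;> tauto
  -- an upward move is only possible below T₀
  have hup : ∀ n, seq (n+1) = seq n + 1 → seq n ≤ T₀ := by
    intro n h
    rw [hseq n] at h
    rcases hBR (seq n) with ⟨h', _⟩ | ⟨h', _⟩ | ⟨h', hc⟩
    · omega
    · omega
    · have hcle : F (seq n - 1) ≤ c := le_trans (le_max_left _ _) hc
      have : F (seq n - 1) < F T₀ := lt_of_le_of_lt hcle h1
      have := hF.lt_iff_lt.mp this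
      omega
  -- the sequence is bounded
  have hbound : ∀ n, seq n ≤ T₀ + 1 := by
    intro n
    induction n with
    | zero => omega
    | succ n ih =>
      rcases hstep n with h | h | h
      · omega
      · omega
      · have := hup n h; omega
  by_cases hA : ∃ n, seq (n+1) = seq n
  · -- eventually constant
    obtain ⟨n, hn⟩ := hA
    refine ⟨n, Or.inl ?_⟩
    have key : ∀ d, seq (n + d) = seq n := by
      intro d
      induction d with
      | zero => rfl
      | succ d ih =>
        have h1 : n + (d+1) = (n + d) + 1 := by omega
        rw [h1, hseq (n+d), ih, ← hseq n, hn]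
    intro m hm
    have : m = n + (m - n) := by omega
    rw [this, key]
  · push_neg at hA
    -- pigeonhole: find a repeat
    have hmaps : ∀ x ∈ Finset.range (T₀+3), seq x ∈ Finset.range (T₀+2) := by
      intro x _
      exact Finset.mem_range.mpr (by have := hbound x; omega)
    obtain ⟨a, _, b, _, hab, heqab⟩ :=
      Finset.exists_ne_map_eq_of_card_lt_of_maps_to
        (by simp : (Finset.range (T₀+2)).card < (Finset.range (T₀+3)).card) hmaps
    -- wlog i < j with seq i = seq j
    obtain ⟨i, j, hij, heq⟩ : ∃ i j, i < j ∧ seq i = seq j := by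
      rcases Nat.lt_or_ge a b with h | h
      · exact ⟨a, b, h, heqab⟩
      · exact ⟨b, a, by omega, heqab.symm⟩
    set p := j - i with hp
    have hppos : 0 < p := by omega
    -- determinism: equal values propagate
    have hshift : ∀ d, seq (i + d) = seq (j + d) := by
      intro d
      induction d with
      | zero => simpa using heq
      | succ d ih =>
        have : i + (d+1) = (i + d) + 1 := by omega
        rw [this, hseq (i+d), ih, ← hseq (j+d)]
        rfl
    have hper : ∀ d, seq (i + d + p) = seq (i + d) := by
      intro d
      have := (hshift d).symm
      have hj : j + d = i + d + p := by omega
      rw [hj] at this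
      exact this
    have hmod : ∀ q, seq (i + q) = seq (i + q % p) := by
      intro q
      induction q using Nat.strong_induction_on with
      | _ q ih =>
        by_cases h : q < p
        · rw [Nat.mod_eq_of_lt h]
        · have h' : p ≤ q := by omega
          have h1 : i + q = i + (q - p) + p := by omega
          rw [h1, hper (q - p), ih (q - p) (by omega),
            Nat.mod_eq_sub_mod h']
    -- maximum over one period
    set M := (Finset.range p).sup (fun t => seq (i + t)) with hM
    have hle : ∀ k, i ≤ k → seq k ≤ M := by
      intro k hk
      have hk' : k = i + (k - i) := by omega
      rw [hk', hmod (k - i)]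
      exact Finset.le_sup (f := fun t => seq (i + t))
        (Finset.mem_range.mpr (Nat.mod_lt _ hppos))
    obtain ⟨t₀, ht₀, hMt₀⟩ := Finset.exists_mem_eq_sup (Finset.range p)
      ⟨0, Finset.mem_range.mpr hppos⟩ (fun t => seq (i + t))
    have hMt₀' : seq (i + t₀) = M := hMt₀.symm
    set N := i + t₀ + p with hN
    have hNM : seq N = M := by rw [hN, hper t₀]; exact hMt₀'
    -- the predecessor of N has value M - 1, and M ≥ 1
    have hNpos : i + 1 ≤ N := by omega
    set a := N - 1 with ha
    have haN : a + 1 = N := by omega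
    have hai : i ≤ a := by omega
    have haM : seq a ≤ M := hle a hai
    have haM1 : seq a = M - 1 ∧ 1 ≤ M := by
      have h1 : seq (a+1) = M := by rw [haN]; exact hNM
      have h2 := hA a
      rcases hstep a with h | h | h <;> omega
    -- BR (M-1) = M and BR M = M - 1
    have hBR1 : BR (M - 1) = M := by
      have := hseq a
      rw [haN, hNM, haM1.1] at this
      exact this.symm
    have hBR2 : BR M = M - 1 := by
      have h1 : seq (N+1) = BR M := by rw [hseq N, hNM]
      have h2 : seq (N+1) ≤ M := hle (N+1) (by omega)
      have h3 := hA N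
      rcases hstep N with h | h | h <;> rw [hNM] at h <;> omega
    refine ⟨N, Or.inr ⟨M - 1, ?_⟩⟩
    have hM1 : M - 1 + 1 = M := by omega
    intro n hn
    induction n, hn using Nat.le_induction with
    | base =>
      right
      refine ⟨by rw [hM1]; exact hNM, ?_⟩
      rw [hseq N, hNM, hBR2]
    | succ n hn ih =>
      rcases ih with ⟨h1, h2⟩ | ⟨h1, h2⟩
      · right
        refine ⟨h2, ?_⟩
        rw [hseq (n+1), h2, hM1, hBR2]
      · left
        refine ⟨h2, ?_⟩
        rw [hseq (n+1), h2, hBR1, hM1]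
end
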